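/- There exist constants c > 0, C > 0 and m₀ such that for every integer m ≥ m₀, every real R with 0 < R < m, and every τ ∈ (0, R] satisfying m·tanh²(τ/2) = 50·tanh²(2R)·(ln m + ln(ln(sinh(2R)/sinh τ))), one has c·cosh(2R)·√(m/ln m) ≤ sinh(2R)/sinh(τ) ≤ C·cosh(2R)·√(m/ln m). -/

import Mathlib

/-- Claim 8 of the paper: if `0 < R < m` and `τ ∈ (0, R]` is a root of
`m tanh²(τ/2) = 50 tanh²(2R)(ln m + ln ln (sinh 2R / sinh τ))`, then
`sinh(2R)/sinh(τ) = Θ(cosh(2R) √(m / ln m))`. -/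
theorem stmt_10 :
    ∃ c : ℝ, 0 < c ∧ ∃ C : ℝ, 0 < C ∧ ∃ m₀ : ℕ,
      ∀ m : ℕ, m₀ ≤ m → ∀ R : ℝ, 0 < R → R < (m : ℝ) →
        ∀ τ : ℝ, τ ∈ Set.Ioc 0 R →
          (m : ℝ) * Real.tanh (τ / 2) ^ 2
              = 50 * Real.tanh (2 * R) ^ 2 *
                  (Real.log m + Real.log (Real.log (Real.sinh (2 * R) / Real.sinh τ))) →
          c * Real.cosh (2 * R) * Real.sqrt ((m : ℝ) / Real.log m)
              ≤ Real.sinh (2 * R) / Real.sinh τ ∧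
          Real.sinh (2 * R) / Real.sinh τ
              ≤ C * Real.cosh (2 * R) * Real.sqrt ((m : ℝ) / Real.log m) := by
  refine ⟨1/40, by norm_num, 1, by norm_num, 10^7, ?_⟩
  intro m hm R hR hRm τ hτ heq
  obtain ⟨hτ0, hτR⟩ := hτ
  have hm7 : (10^7 : ℝ) ≤ (m : ℝ) := by exact_mod_cast Nat.cast_le.mpr hm
  have hm0 : (0:ℝ) < m := by linarith
  have hm1 : (1:ℝ) ≤ m := by linarith
  set t := Real.tanh (τ / 2) with ht_def
  set s := Real.sinh (2 * R) / Real.sinh τ with hs_def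
  set lm := Real.log (m : ℝ) with hlm_def
  set L := Real.log s with hL_def
  set A := lm + Real.log L with hA_def
  clear_value t s lm L A
  -- basic positivity
  have hsinhτ : 0 < Real.sinh τ := Real.sinh_pos_iff.mpr hτ0
  have hsinhR : 0 < Real.sinh R := Real.sinh_pos_iff.mpr hR
  have hcosh2R : 0 < Real.cosh (2 * R) := Real.cosh_pos _
  have hcoshτ1 : (2:ℝ) ≤ Real.cosh τ + 1 := by linarith [Real.one_le_cosh τ]
  -- s ≥ 2
  have hsinhτR : Real.sinh τ ≤ Real.sinh R := Real.sinh_le_sinh.mpr hτR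
  have hs2 : (2:ℝ) ≤ s := by
    have h1 : Real.sinh (2 * R) = 2 * Real.sinh R * Real.cosh R := Real.sinh_two_mul R
    rw [hs_def, le_div_iff₀ hsinhτ]
    have h2 : 0 ≤ (Real.cosh R - 1) * Real.sinh R :=
      mul_nonneg (by linarith [Real.one_le_cosh R]) hsinhR.le
    linarith [h1, h2, hsinhτR]
  have hs_pos : 0 < s := by linarith
  have hL2 : Real.log 2 ≤ L := by rw [hL_def]; exact Real.log_le_log (by norm_num) hs2
  have hL0 : 0 < L := lt_of_lt_of_le (Real.log_pos (by norm_num)) hL2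
  -- lm ≥ 2
  have hlog2 : (0.6931471803 : ℝ) < Real.log 2 := Real.log_two_gt_d9
  have hlm2 : (2:ℝ) ≤ lm := by
    have h8 : Real.log ((2:ℝ)^3) ≤ lm := by
      rw [hlm_def]; exact Real.log_le_log (by norm_num) (by linarith)
    rw [Real.log_pow] at h8
    push_cast at h8
    linarith
  have hlm0 : (0:ℝ) < lm := by linarith
  -- log L ≥ -1
  have hexp1 : Real.exp (-1) ≤ L := by
    have h1 : (2:ℝ) ≤ Real.exp 1 := by
      have := Real.add_one_le_exp (1:ℝ); linarith
    have h2 : Real.exp (-1) ≤ 1/2 := by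
      rw [Real.exp_neg]
      rw [inv_le_comm₀ (Real.exp_pos 1) (by norm_num)]
      linarith
    linarith
  have hlogL : (-1:ℝ) ≤ Real.log L := by
    calc (-1:ℝ) = Real.log (Real.exp (-1)) := (Real.log_exp _).symm
      _ ≤ Real.log L := Real.log_le_log (Real.exp_pos _) hexp1
  -- A ≥ lm/2
  have hA : lm / 2 ≤ A := by rw [hA_def]; linarith
  have hA0 : 0 < A := by linarith
  -- t > 0
  have hcoshhalf : 0 < Real.cosh (τ / 2) := Real.cosh_pos _
  have hsinhhalf : 0 < Real.sinh (τ / 2) := Real.sinh_pos_iff.mpr (by linarith)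
  have ht0 : 0 < t := by
    rw [ht_def, Real.tanh_eq_sinh_div_cosh]
    positivity
  -- sinh τ = t * (cosh τ + 1)
  have hident : Real.sinh τ = t * (Real.cosh τ + 1) := by
    have h1 : Real.sinh τ = 2 * Real.sinh (τ/2) * Real.cosh (τ/2) := by
      have := Real.sinh_two_mul (τ/2)
      rwa [show 2*(τ/2) = τ by ring] at this
    have h2 : Real.cosh τ = Real.cosh (τ/2)^2 + Real.sinh (τ/2)^2 := by
      have := Real.cosh_two_mul (τ/2)
      rwa [show 2*(τ/2) = τ by ring] at this
    rw [ht_def, Real.tanh_eq_sinh_div_cosh]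
    rw [div_mul_eq_mul_div, eq_div_iff hcoshhalf.ne', h1, h2]
    linear_combination Real.sinh (τ/2) * (Real.cosh_sq_sub_sinh_sq (τ/2))
  -- sinh 2R = tanh 2R * cosh 2R
  have hident2 : Real.sinh (2*R) = Real.tanh (2*R) * Real.cosh (2*R) := by
    rw [Real.tanh_eq_sinh_div_cosh, div_mul_cancel₀ _ hcosh2R.ne']
  -- key equation
  have hsq : s^2 * Real.sinh τ^2 = Real.sinh (2*R)^2 := by
    rw [hs_def]; field_simp
  have hE : (m:ℝ) * Real.cosh (2*R)^2 = 50 * A * s^2 * (Real.cosh τ + 1)^2 := by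
    have key : ((m:ℝ) * Real.cosh (2*R)^2) * t^2
        = (50 * A * s^2 * (Real.cosh τ + 1)^2) * t^2 := by
      have e1 : Real.sinh (2*R)^2 = Real.tanh (2*R)^2 * Real.cosh (2*R)^2 := by
        rw [hident2]; ring
      have e2 : Real.sinh τ ^ 2 = t^2 * (Real.cosh τ + 1)^2 := by
        rw [hident]; ring
      calc ((m:ℝ) * Real.cosh (2*R)^2) * t^2
          = ((m:ℝ) * t^2) * Real.cosh (2*R)^2 := by ring
        _ = (50 * Real.tanh (2*R)^2 * A) * Real.cosh (2*R)^2 := by rw [heq]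
        _ = 50 * A * (Real.tanh (2*R)^2 * Real.cosh (2*R)^2) := by ring
        _ = 50 * A * Real.sinh (2*R)^2 := by rw [e1]
        _ = 50 * A * (s^2 * Real.sinh τ^2) := by rw [hsq]
        _ = 50 * A * (s^2 * (t^2 * (Real.cosh τ + 1)^2)) := by rw [e2]
        _ = (50 * A * s^2 * (Real.cosh τ + 1)^2) * t^2 := by ring
    exact mul_right_cancel₀ (pow_ne_zero 2 ht0.ne') key
  -- upper bound on s²
  have hub2 : s^2 * lm ≤ (m:ℝ) * Real.cosh (2*R)^2 := by
    have h4 : (4:ℝ) ≤ (Real.cosh τ + 1)^2 := by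
      rw [sq]
      have := mul_le_mul hcoshτ1 hcoshτ1 (by norm_num) (by linarith : (0:ℝ) ≤ Real.cosh τ + 1)
      linarith
    have hAs : 0 ≤ A * s^2 := mul_nonneg hA0.le (sq_nonneg s)
    have e1 : s^2 * lm ≤ s^2 * (2*A) :=
      mul_le_mul_of_nonneg_left (by linarith) (sq_nonneg s)
    have e2 : 50*A*s^2*4 ≤ 50*A*s^2*(Real.cosh τ + 1)^2 :=
      mul_le_mul_of_nonneg_left h4 (by linarith [hAs])
    rw [hE]
    linarith [hAs, e1, e2]
  have hubsq : s^2 ≤ Real.cosh (2*R)^2 * ((m:ℝ)/lm) := by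
    rw [mul_div_assoc', le_div_iff₀ hlm0]
    linarith
  have hub : s ≤ Real.cosh (2*R) * Real.sqrt ((m:ℝ)/lm) := by
    have h2 : Real.sqrt (s^2) ≤ Real.sqrt (Real.cosh (2*R)^2 * ((m:ℝ)/lm)) :=
      Real.sqrt_le_sqrt hubsq
    rw [Real.sqrt_sq hs_pos.le, Real.sqrt_mul (sq_nonneg _),
      Real.sqrt_sq hcosh2R.le] at h2
    exact h2
  -- upper bound on log L
  have hcoshexp : Real.cosh (2*R) ≤ Real.exp (2*R) := by
    have h1 := Real.cosh_add_sinh (2*R)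
    have h2 : 0 ≤ Real.sinh (2*R) := by positivity
    linarith
  have hsqrtm_le : Real.sqrt ((m:ℝ)/lm) ≤ (m:ℝ) := by
    have h1 : Real.sqrt ((m:ℝ)/lm) ≤ Real.sqrt ((m:ℝ)^2) := by
      apply Real.sqrt_le_sqrt
      rw [div_le_iff₀ hlm0]
      calc (m:ℝ) = (m:ℝ) * 1 * 1 := by ring
        _ ≤ (m:ℝ) * (m:ℝ) * lm := by
            apply mul_le_mul (mul_le_mul le_rfl hm1 one_pos.le hm0.le) (by linarith)
              one_pos.le (mul_nonneg hm0.le hm0.le)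
        _ = (m:ℝ)^2 * lm := by ring
    rwa [Real.sqrt_sq hm0.le] at h1
  have hsLup : s ≤ Real.exp (3*(m:ℝ)) := by
    have h1 : s ≤ Real.exp (2*R) * (m:ℝ) := by
      calc s ≤ Real.cosh (2*R) * Real.sqrt ((m:ℝ)/lm) := hub
        _ ≤ Real.exp (2*R) * (m:ℝ) := by
            apply mul_le_mul hcoshexp hsqrtm_le (Real.sqrt_nonneg _) (Real.exp_pos _).le
    have h2 : (m:ℝ) ≤ Real.exp (m:ℝ) := by
      have := Real.add_one_le_exp (m:ℝ); linarith
    calc s ≤ Real.exp (2*R) * (m:ℝ) := h1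
      _ ≤ Real.exp (2*(m:ℝ)) * Real.exp (m:ℝ) := by
          apply mul_le_mul _ h2 hm0.le (Real.exp_pos _).le
          exact Real.exp_le_exp.mpr (by linarith)
      _ = Real.exp (3*(m:ℝ)) := by rw [← Real.exp_add]; ring_nf
  have hLup : L ≤ 3*(m:ℝ) := by
    have h := Real.log_le_log hs_pos hsLup
    rw [Real.log_exp] at h
    rw [hL_def]
    exact h
  have hlogL2 : Real.log L ≤ 2 * lm := by
    have h1 : Real.log L ≤ Real.log ((m:ℝ)^2) := by
      apply Real.log_le_log hL0
      linarith [hLup, sq_nonneg ((m:ℝ) - 3), hm7]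
    rw [Real.log_pow] at h1
    push_cast at h1
    linarith
  have hAub : A ≤ 3 * lm := by rw [hA_def]; linarith
  -- tanh(2R)² ≤ 1
  have htanh2R : Real.tanh (2*R)^2 ≤ 1 := by
    rw [Real.tanh_eq_sinh_div_cosh, div_pow, div_le_one (by positivity)]
    linarith [Real.sinh_sq (2*R)]
  -- m t² ≤ 150 lm
  have ht2 : (m:ℝ) * t^2 ≤ 150 * lm := by
    rw [heq]
    have h1 : 0 ≤ (1 - Real.tanh (2*R)^2) * A :=
      mul_nonneg (sub_nonneg.mpr htanh2R) hA0.le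
    linarith [h1, hAub]
  -- √m ≥ 3000 and lm ≤ 2√m
  have hsqrtm : (3000:ℝ) ≤ Real.sqrt m := by
    have h1 : ((3000:ℝ))^2 ≤ (m:ℝ) := by norm_num; linarith
    have := Real.sqrt_le_sqrt h1
    rwa [Real.sqrt_sq (by norm_num : (0:ℝ) ≤ 3000)] at this
  have hlmsqrt : lm ≤ 2 * Real.sqrt m := by
    have h1 : Real.log (Real.sqrt m) ≤ Real.sqrt m - 1 :=
      Real.log_le_sub_one_of_pos (by positivity)
    have h2 : Real.log (Real.sqrt m) = lm / 2 := by rw [hlm_def]; exact Real.log_sqrt hm0.le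
    linarith
  have ht2' : t^2 ≤ 1/10 := by
    have h3 : Real.sqrt m ≤ (m:ℝ)/3000 := by
      rw [le_div_iff₀ (by norm_num : (0:ℝ) < 3000)]
      have e := mul_le_mul_of_nonneg_left hsqrtm (Real.sqrt_nonneg (m:ℝ))
      have e2 := Real.sq_sqrt hm0.le
      rw [sq] at e2
      linarith
    have h5 : (m:ℝ) * t^2 ≤ (m:ℝ) * (1/10) := by linarith
    exact le_of_mul_le_mul_left h5 hm0
  -- cosh τ ≤ 2
  have hcoshτ : Real.cosh τ ≤ 2 := by
    have hi : t^2 * (Real.cosh τ + 1) = Real.cosh τ - 1 := by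
      have h1 := Real.sinh_sq τ
      rw [hident] at h1
      have h2 : (t^2 * (Real.cosh τ + 1)) * (Real.cosh τ + 1)
          = (Real.cosh τ - 1) * (Real.cosh τ + 1) := by linear_combination h1
      exact mul_right_cancel₀ (by positivity : (Real.cosh τ + 1) ≠ 0) h2
    have h3 : 0 ≤ (1/10 - t^2) * (Real.cosh τ + 1) :=
      mul_nonneg (by linarith) (by positivity)
    linarith [hi, h3, Real.one_le_cosh τ]
  -- lower bound
  have hlb2 : (m:ℝ) * Real.cosh (2*R)^2 ≤ 1600 * lm * s^2 := by
    have h9 : (Real.cosh τ + 1)^2 ≤ 9 := by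
      rw [sq]
      have := mul_le_mul (by linarith : Real.cosh τ + 1 ≤ 3)
        (by linarith : Real.cosh τ + 1 ≤ 3) (by positivity) (by norm_num : (0:ℝ) ≤ 3)
      linarith
    calc (m:ℝ) * Real.cosh (2*R)^2 = 50 * A * s^2 * (Real.cosh τ + 1)^2 := hE
      _ ≤ 50 * A * s^2 * 9 := by
          apply mul_le_mul_of_nonneg_left h9
          linarith [mul_nonneg hA0.le (sq_nonneg s)]
      _ ≤ 50 * (3 * lm) * s^2 * 9 := by
          linarith [mul_le_mul_of_nonneg_right hAub (sq_nonneg s)]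
      _ ≤ 1600 * lm * s^2 := by
          linarith [mul_nonneg hlm0.le (sq_nonneg s)]
  have hlbsq : Real.cosh (2*R)^2 * ((m:ℝ)/lm) ≤ 1600 * s^2 := by
    rw [mul_div_assoc', div_le_iff₀ hlm0]
    linarith
  have hlb : 1/40 * Real.cosh (2*R) * Real.sqrt ((m:ℝ)/lm) ≤ s := by
    have h2 : Real.sqrt (Real.cosh (2*R)^2 * ((m:ℝ)/lm)) ≤ Real.sqrt (1600 * s^2) :=
      Real.sqrt_le_sqrt hlbsq
    rw [Real.sqrt_mul (sq_nonneg _), Real.sqrt_sq hcosh2R.le,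
      show (1600:ℝ) = 40^2 by norm_num, Real.sqrt_mul (by positivity),
      Real.sqrt_sq (by norm_num : (0:ℝ) ≤ 40), Real.sqrt_sq hs_pos.le] at h2
    linarith
  exact ⟨hlb, by linarith⟩
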